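/- Call a subset S of the set of Lagrangian subspaces of (ℝ^{2n}, ω) a circle if there exist g ∈ Sp(2n,ℝ) and a nondegenerate symmetric real n×n matrix B such that S = {g·Γ_{λB} : λ ∈ ℝ} ∪ {g·L∞}, where Γ_M = {(x, Mx) : x ∈ ℝⁿ} and L∞ = {0} × ℝⁿ. Let L1, L2, L3, L4 be Lagrangian subspaces lying on a common circle S, with L1 transverse to L2 and L3 transverse to L4. Then the composition of Lagrangian reflections T = Refl(L1,L2) ∘ Refl(L3,L4) preserves S: for every L ∈ S one has T(L) ∈ S. -/

import Mathlib

open Module Submodule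

/-- `ℝ^{2n} = ℝⁿ × ℝⁿ`. -/
abbrev SympV (n : ℕ) := (Fin n → ℝ) × (Fin n → ℝ)

/-- The standard symplectic form `ω((x,y),(x',y')) = ⟨x,y'⟩ - ⟨y,x'⟩`. -/
def stdOmega (n : ℕ) (p q : SympV n) : ℝ :=
  (∑ i, p.1 i * q.2 i) - ∑ i, p.2 i * q.1 i

/-- A Lagrangian: an `n`-dimensional subspace on which `ω` vanishes identically. -/
def IsLagrangian (n : ℕ) (L : Submodule ℝ (SympV n)) : Prop :=
  finrank ℝ L = n ∧ ∀ u ∈ L, ∀ v ∈ L, stdOmega n u v = 0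

/-- Membership in `Sp(2n,ℝ)` for a linear automorphism of `ℝ^{2n}`. -/
def IsSymplectic (n : ℕ) (g : SympV n ≃ₗ[ℝ] SympV n) : Prop :=
  ∀ u v, stdOmega n (g u) (g v) = stdOmega n u v

/-- `Γ_M = {(x, Mx) : x ∈ ℝⁿ}`. -/
def matGraph (n : ℕ) (M : Matrix (Fin n) (Fin n) ℝ) : Submodule ℝ (SympV n) :=
  LinearMap.graph M.mulVecLin

/-- `L∞ = {0} × ℝⁿ`. -/
def lagInfty (n : ℕ) : Submodule ℝ (SympV n) :=
  (⊥ : Submodule ℝ (Fin n → ℝ)).prod (⊤ : Submodule ℝ (Fin n → ℝ))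

/-- A circle of Lagrangians: the `Sp(2n,ℝ)`-image of
`{Γ_{λB} : λ ∈ ℝ} ∪ {L∞}` for a nondegenerate symmetric matrix `B`. -/
def IsCircle (n : ℕ) (S : Set (Submodule ℝ (SympV n))) : Prop :=
  ∃ g : SympV n ≃ₗ[ℝ] SympV n, IsSymplectic n g ∧
    ∃ B : Matrix (Fin n) (Fin n) ℝ, B.IsSymm ∧ IsUnit B.det ∧
      S = (Set.range fun lam : ℝ =>
            Submodule.map (g : SympV n →ₗ[ℝ] SympV n) (matGraph n (lam • B))) ∪
          {Submodule.map (g : SympV n →ₗ[ℝ] SympV n) (lagInfty n)}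

/-- The projection onto `U` with kernel `W`, as an endomorphism of `V`. -/
noncomputable def projTo {V : Type*} [AddCommGroup V] [Module ℝ V]
    (U W : Submodule ℝ V) (h : IsCompl U W) : V →ₗ[ℝ] V :=
  U.subtype ∘ₗ U.linearProjOfIsCompl W h

/-- The reflection in the pair `(U, W)`: `π_U^W - π_W^U`. -/
noncomputable def reflPair {V : Type*} [AddCommGroup V] [Module ℝ V]
    (U W : Submodule ℝ V) (h : IsCompl U W) : V →ₗ[ℝ] V :=
  projTo U W h - projTo W U h.symm

section Aux

variable {V : Type*} [AddCommGroup V] [Module ℝ V]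

lemma reflPair_apply_left {U W : Submodule ℝ V} (h : IsCompl U W) {u : V} (hu : u ∈ U) :
    reflPair U W h u = u := by
  have h1 : (U.linearProjOfIsCompl W h) u = ⟨u, hu⟩ :=
    Submodule.linearProjOfIsCompl_apply_left h ⟨u, hu⟩
  have h2 : (W.linearProjOfIsCompl U h.symm) u = 0 :=
    Submodule.projectionOnto_apply_of_mem_right h.symm hu
  simp [reflPair, projTo, h1, h2]

lemma reflPair_apply_right {U W : Submodule ℝ V} (h : IsCompl U W) {w : V} (hw : w ∈ W) :
    reflPair U W h w = -w := by
  have h1 : (U.linearProjOfIsCompl W h) w = 0 :=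
    Submodule.projectionOnto_apply_of_mem_right h hw
  have h2 : (W.linearProjOfIsCompl U h.symm) w = ⟨w, hw⟩ :=
    Submodule.linearProjOfIsCompl_apply_left h.symm ⟨w, hw⟩
  simp [reflPair, projTo, h1, h2]

lemma reflPair_eq_of {U W : Submodule ℝ V} (h : IsCompl U W) (f : V →ₗ[ℝ] V)
    (hU : ∀ u ∈ U, f u = u) (hW : ∀ w ∈ W, f w = -w) : reflPair U W h = f := by
  ext x
  have hx := Submodule.projection_add_projection_eq_self h x
  set u : V := ((U.linearProjOfIsCompl W h) x : V) with hu
  set w : V := ((W.linearProjOfIsCompl U h.symm) x : V) with hw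
  have hxu : x = u + w := hx.symm
  rw [hxu, map_add, map_add, reflPair_apply_left h (by exact SetLike.coe_mem _),
    reflPair_apply_right h (by exact SetLike.coe_mem _),
    hU u (SetLike.coe_mem _), hW w (SetLike.coe_mem _)]

lemma isCompl_of_map_isCompl (e : V ≃ₗ[ℝ] V) {U W : Submodule ℝ V}
    (h : IsCompl (Submodule.map (e : V →ₗ[ℝ] V) U) (Submodule.map (e : V →ₗ[ℝ] V) W)) :
    IsCompl U W :=
  (Submodule.orderIsoMapComap e).isCompl_iff.mpr h

lemma reflPair_conj (e : V ≃ₗ[ℝ] V) {U W : Submodule ℝ V} (h : IsCompl U W)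
    (h' : IsCompl (Submodule.map (e : V →ₗ[ℝ] V) U) (Submodule.map (e : V →ₗ[ℝ] V) W)) :
    reflPair (Submodule.map (e : V →ₗ[ℝ] V) U) (Submodule.map (e : V →ₗ[ℝ] V) W) h'
      = (e : V →ₗ[ℝ] V) ∘ₗ reflPair U W h ∘ₗ (e.symm : V →ₗ[ℝ] V) := by
  apply reflPair_eq_of
  · rintro u' ⟨u, hu, rfl⟩
    simp [reflPair_apply_left h hu]
  · rintro w' ⟨w, hw, rfl⟩
    simp [reflPair_apply_right h hw]

end Aux

section Core

variable (n : ℕ) (B : Matrix (Fin n) (Fin n) ℝ)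

/-- The graph `Γ_{aB}`. -/
def Gr (a : ℝ) : Submodule ℝ (SympV n) := matGraph n (a • B)

lemma mem_Gr {a : ℝ} {z : SympV n} : z ∈ Gr n B a ↔ z.2 = a • B.mulVec z.1 := by
  simp [Gr, matGraph, LinearMap.mem_graph_iff, Matrix.smul_mulVec]

lemma mem_lagInfty {z : SympV n} : z ∈ lagInfty n ↔ z.1 = 0 := by
  simp [lagInfty, Submodule.mem_prod]

/-- The "`2×2` matrix acting on the line coordinates" map. -/
noncomputable def Tmap (p q r s : ℝ) : SympV n →ₗ[ℝ] SympV n :=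
  LinearMap.prod
    (p • LinearMap.fst ℝ (Fin n → ℝ) (Fin n → ℝ)
      + q • (B⁻¹.mulVecLin ∘ₗ LinearMap.snd ℝ (Fin n → ℝ) (Fin n → ℝ)))
    (r • (B.mulVecLin ∘ₗ LinearMap.fst ℝ (Fin n → ℝ) (Fin n → ℝ))
      + s • LinearMap.snd ℝ (Fin n → ℝ) (Fin n → ℝ))

@[simp] lemma Tmap_apply (p q r s : ℝ) (z : SympV n) :
    Tmap n B p q r s z
      = (p • z.1 + q • B⁻¹.mulVec z.2, r • B.mulVec z.1 + s • z.2) := rfl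

lemma Binv_B (hB : IsUnit B.det) (x : Fin n → ℝ) : B⁻¹.mulVec (B.mulVec x) = x := by
  rw [Matrix.mulVec_mulVec, Matrix.nonsing_inv_mul _ hB, Matrix.one_mulVec]

lemma B_Binv (hB : IsUnit B.det) (x : Fin n → ℝ) : B.mulVec (B⁻¹.mulVec x) = x := by
  rw [Matrix.mulVec_mulVec, Matrix.mul_nonsing_inv _ hB, Matrix.one_mulVec]

lemma Tcomp (hB : IsUnit B.det) (p q r s p' q' r' s' : ℝ) :
    Tmap n B p q r s ∘ₗ Tmap n B p' q' r' s'
      = Tmap n B (p*p'+q*r') (p*q'+q*s') (r*p'+s*r') (r*q'+s*s') := by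
  apply LinearMap.ext; intro z
  simp only [LinearMap.comp_apply, Tmap_apply]
  refine Prod.ext ?_ ?_ <;>
    simp only [Matrix.mulVec_add, Matrix.mulVec_smul, Binv_B n B hB, B_Binv n B hB,
      smul_add, smul_smul] <;> module


lemma refl_Gr_Gr (hB : IsUnit B.det) {a b : ℝ} (hab : a ≠ b)
    (h : IsCompl (Gr n B a) (Gr n B b)) :
    reflPair (Gr n B a) (Gr n B b) h
      = Tmap n B (-(a+b)/(a-b)) (2/(a-b)) (-(2*a*b)/(a-b)) ((a+b)/(a-b)) := by
  have hab' : a - b ≠ 0 := sub_ne_zero.mpr hab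
  apply reflPair_eq_of
  · rintro ⟨x, y⟩ hz
    rw [mem_Gr] at hz
    simp only at hz
    subst hz
    have h1 : -(a+b)/(a-b) + 2/(a-b) * a = 1 := by field_simp; ring
    have h2 : -(2*a*b)/(a-b) + (a+b)/(a-b) * a = a := by field_simp; ring
    refine Prod.ext ?_ ?_ <;>
      simp only [Tmap_apply, Matrix.mulVec_smul, Binv_B n B hB, smul_smul, ← add_smul, h1, h2,
        one_smul]
  · rintro ⟨x, y⟩ hz
    rw [mem_Gr] at hz
    simp only at hz
    subst hz
    have h1 : -(a+b)/(a-b) + 2/(a-b) * b = -1 := by field_simp; ring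
    have h2 : -(2*a*b)/(a-b) + (a+b)/(a-b) * b = -b := by field_simp; ring
    refine Prod.ext ?_ ?_ <;>
      simp only [Tmap_apply, Matrix.mulVec_smul, Binv_B n B hB, smul_smul, ← add_smul, h1, h2,
        Prod.fst_neg, Prod.snd_neg, neg_one_smul, neg_smul, one_smul]

lemma refl_Gr_inf (hB : IsUnit B.det) {a : ℝ}
    (h : IsCompl (Gr n B a) (lagInfty n)) :
    reflPair (Gr n B a) (lagInfty n) h = Tmap n B 1 0 (2*a) (-1) := by
  apply reflPair_eq_of
  · rintro ⟨x, y⟩ hz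
    rw [mem_Gr] at hz
    simp only at hz
    subst hz
    have h2 : 2*a + (-1) * a = a := by ring
    refine Prod.ext ?_ ?_ <;>
      simp only [Tmap_apply, smul_smul, ← add_smul, h2, one_smul, zero_smul, add_zero]
  · rintro ⟨x, y⟩ hz
    rw [mem_lagInfty] at hz
    simp only at hz
    subst hz
    refine Prod.ext ?_ ?_ <;>
      simp [Matrix.mulVec_zero]

lemma refl_inf_Gr (hB : IsUnit B.det) {a : ℝ}
    (h : IsCompl (lagInfty n) (Gr n B a)) :
    reflPair (lagInfty n) (Gr n B a) h = Tmap n B (-1) 0 (-(2*a)) 1 := by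
  apply reflPair_eq_of
  · rintro ⟨x, y⟩ hz
    rw [mem_lagInfty] at hz
    simp only at hz
    subst hz
    refine Prod.ext ?_ ?_ <;>
      simp [Matrix.mulVec_zero]
  · rintro ⟨x, y⟩ hz
    rw [mem_Gr] at hz
    simp only at hz
    subst hz
    have h2 : -(2*a) + 1 * a = -a := by ring
    refine Prod.ext ?_ ?_ <;>
      simp only [Tmap_apply, smul_smul, Prod.fst_neg, Prod.snd_neg, zero_smul, add_zero]
    · module
    · rw [← add_smul, h2, neg_smul]

lemma Tmap_map_Gr_mem (hB : IsUnit B.det) {p q r s : ℝ} (hdet : p*s - q*r ≠ 0) (a : ℝ) :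
    Submodule.map (Tmap n B p q r s) (Gr n B a)
      ∈ Set.range (Gr n B) ∪ {lagInfty n} := by
  by_cases h1 : p + q*a = 0
  · have h2 : r + s*a ≠ 0 := by
      intro h2
      apply hdet
      have hp : p = -(q*a) := by linarith
      have hr : r = -(s*a) := by linarith
      rw [hp, hr]; ring
    right
    show _ = lagInfty n
    apply le_antisymm
    · intro z hz
      rw [Submodule.mem_map] at hz
      obtain ⟨⟨x, y⟩, hw, rfl⟩ := hz
      rw [mem_Gr] at hw; simp only at hw; subst hw
      rw [mem_lagInfty]
      show p • x + q • B⁻¹.mulVec (a • B.mulVec x) = 0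
      simp only [Matrix.mulVec_smul, Binv_B n B hB]
      match_scalars
      linarith
    · rintro ⟨x, y⟩ hz
      rw [mem_lagInfty] at hz; simp only at hz; subst hz
      rw [Submodule.mem_map]
      refine ⟨((r+s*a)⁻¹ • B⁻¹.mulVec y, a • B.mulVec ((r+s*a)⁻¹ • B⁻¹.mulVec y)), ?_, ?_⟩
      · rw [mem_Gr]
      · refine Prod.ext ?_ ?_ <;>
          · show _ = _
            simp only [Tmap_apply, Matrix.mulVec_smul, Binv_B n B hB, B_Binv n B hB]
            match_scalars <;> (try field_simp) <;> (try ring) <;> (try linarith)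
  · left
    refine ⟨(r+s*a)/(p+q*a), ?_⟩
    apply le_antisymm
    · rintro ⟨x, y⟩ hz
      rw [mem_Gr] at hz; simp only at hz; subst hz
      rw [Submodule.mem_map]
      refine ⟨((p+q*a)⁻¹ • x, a • B.mulVec ((p+q*a)⁻¹ • x)), ?_, ?_⟩
      · rw [mem_Gr]
      · refine Prod.ext ?_ ?_ <;>
          · show _ = _
            simp only [Tmap_apply, Matrix.mulVec_smul, Binv_B n B hB, B_Binv n B hB]
            match_scalars <;> (try field_simp) <;> (try ring) <;> (try linarith)
    · intro z hz
      rw [Submodule.mem_map] at hz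
      obtain ⟨⟨x, y⟩, hw, rfl⟩ := hz
      rw [mem_Gr] at hw; simp only at hw; subst hw
      rw [mem_Gr]
      show r • B.mulVec x + s • (a • B.mulVec x)
        = ((r+s*a)/(p+q*a)) • B.mulVec (p • x + q • B⁻¹.mulVec (a • B.mulVec x))
      simp only [Matrix.mulVec_add, Matrix.mulVec_smul, Binv_B n B hB, B_Binv n B hB]
      have h1' : p + q * a ≠ 0 := h1
      match_scalars
      simp only [mul_one]
      rw [div_mul_cancel₀ _ h1']

lemma Tmap_map_inf_mem (hB : IsUnit B.det) {p q r s : ℝ} (hdet : p*s - q*r ≠ 0) :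
    Submodule.map (Tmap n B p q r s) (lagInfty n)
      ∈ Set.range (Gr n B) ∪ {lagInfty n} := by
  by_cases hq : q = 0
  · have hs : s ≠ 0 := by
      intro hs
      apply hdet
      rw [hq, hs]; ring
    right
    show _ = lagInfty n
    apply le_antisymm
    · intro z hz
      rw [Submodule.mem_map] at hz
      obtain ⟨⟨x, y⟩, hw, rfl⟩ := hz
      rw [mem_lagInfty] at hw; simp only at hw; subst hw
      rw [mem_lagInfty]
      show p • (0 : Fin n → ℝ) + q • B⁻¹.mulVec y = 0
      rw [hq, smul_zero, zero_smul, add_zero]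
    · rintro ⟨x, y⟩ hz
      rw [mem_lagInfty] at hz; simp only at hz; subst hz
      rw [Submodule.mem_map]
      refine ⟨(0, s⁻¹ • y), ?_, ?_⟩
      · rw [mem_lagInfty]
      · refine Prod.ext ?_ ?_
        · show p • (0 : Fin n → ℝ) + q • B⁻¹.mulVec (s⁻¹ • y) = 0
          rw [hq, smul_zero, zero_smul, add_zero]
        · show r • B.mulVec 0 + s • (s⁻¹ • y) = y
          rw [Matrix.mulVec_zero, smul_zero, zero_add, smul_smul, mul_inv_cancel₀ hs, one_smul]
  · left
    refine ⟨s/q, ?_⟩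
    apply le_antisymm
    · rintro ⟨x, y⟩ hz
      rw [mem_Gr] at hz; simp only at hz; subst hz
      rw [Submodule.mem_map]
      refine ⟨(0, q⁻¹ • B.mulVec x), ?_, ?_⟩
      · rw [mem_lagInfty]
      · refine Prod.ext ?_ ?_ <;>
          · show _ = _
            simp only [Tmap_apply, Matrix.mulVec_zero, Matrix.mulVec_smul,
              Binv_B n B hB, B_Binv n B hB]
            match_scalars <;> (try field_simp) <;> (try ring)
    · intro z hz
      rw [Submodule.mem_map] at hz
      obtain ⟨⟨x, y⟩, hw, rfl⟩ := hz
      rw [mem_lagInfty] at hw; simp only at hw; subst hw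
      rw [mem_Gr]
      show r • B.mulVec (0 : Fin n → ℝ) + s • y
        = (s/q) • B.mulVec (p • (0 : Fin n → ℝ) + q • B⁻¹.mulVec y)
      simp only [Matrix.mulVec_zero, smul_zero, zero_add, smul_add, Matrix.mulVec_add,
        Matrix.mulVec_smul, Binv_B n B hB, B_Binv n B hB]
      match_scalars
      field_simp

lemma Tmap_map_mem (hB : IsUnit B.det) {p q r s : ℝ} (hdet : p*s - q*r ≠ 0)
    {L : Submodule ℝ (SympV n)} (hL : L ∈ Set.range (Gr n B) ∪ {lagInfty n}) :
    Submodule.map (Tmap n B p q r s) L ∈ Set.range (Gr n B) ∪ {lagInfty n} := by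
  rcases hL with ⟨a, rfl⟩ | rfl
  · exact Tmap_map_Gr_mem n B hB hdet a
  · exact Tmap_map_inf_mem n B hB hdet

lemma Gr_ne_bot (hn : n ≠ 0) (a : ℝ) : Gr n B a ≠ ⊥ := by
  intro hbot
  have i : Fin n := ⟨0, Nat.pos_of_ne_zero hn⟩
  have hx : (Pi.single i (1:ℝ) : Fin n → ℝ) ≠ 0 := by
    intro h0
    have := congrFun h0 i
    simp [Pi.single_eq_same] at this
  have hmem : (((Pi.single i (1:ℝ) : Fin n → ℝ), a • B.mulVec (Pi.single i (1:ℝ))) : SympV n)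
      ∈ Gr n B a := by rw [mem_Gr]
  rw [hbot, Submodule.mem_bot] at hmem
  exact hx (congrArg Prod.fst hmem)

lemma lagInfty_ne_bot (hn : n ≠ 0) : lagInfty n ≠ (⊥ : Submodule ℝ (SympV n)) := by
  intro hbot
  have i : Fin n := ⟨0, Nat.pos_of_ne_zero hn⟩
  have hmem : (((0 : Fin n → ℝ), Pi.single i (1:ℝ)) : SympV n) ∈ lagInfty n := by rw [mem_lagInfty]
  rw [hbot, Submodule.mem_bot] at hmem
  have := congrArg Prod.snd hmem
  have h2 := congrFun this i
  simp [Pi.single_eq_same] at h2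

lemma refl_param (hB : IsUnit B.det) (hn : n ≠ 0) {U W : Submodule ℝ (SympV n)}
    (hU : U ∈ Set.range (Gr n B) ∪ {lagInfty n})
    (hW : W ∈ Set.range (Gr n B) ∪ {lagInfty n}) (h : IsCompl U W) :
    ∃ p q r s : ℝ, p*s - q*r ≠ 0 ∧ reflPair U W h = Tmap n B p q r s := by
  rcases hU with ⟨a, rfl⟩ | rfl
  · rcases hW with ⟨b, rfl⟩ | rfl
    · have hab : a ≠ b := by
        intro hab
        subst hab
        exact Gr_ne_bot n B hn a (disjoint_self.mp h.disjoint)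
      have hab' : a - b ≠ 0 := sub_ne_zero.mpr hab
      refine ⟨-(a+b)/(a-b), 2/(a-b), -(2*a*b)/(a-b), (a+b)/(a-b), ?_,
        refl_Gr_Gr n B hB hab h⟩
      have : -(a+b)/(a-b) * ((a+b)/(a-b)) - 2/(a-b) * (-(2*a*b)/(a-b)) = -1 := by
        field_simp
        ring
      rw [this]
      norm_num
    · exact ⟨1, 0, 2*a, -1, by norm_num, refl_Gr_inf n B hB h⟩
  · rcases hW with ⟨b, rfl⟩ | rfl
    · exact ⟨-1, 0, -(2*b), 1, by norm_num, refl_inf_Gr n B hB h⟩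
    · exact absurd (disjoint_self.mp h.disjoint) (lagInfty_ne_bot n hn)

end Core

theorem stmt17 (n : ℕ) (S : Set (Submodule ℝ (SympV n))) (hS : IsCircle n S)
    (L1 L2 L3 L4 : Submodule ℝ (SympV n))
    (hL1 : L1 ∈ S) (hL2 : L2 ∈ S) (hL3 : L3 ∈ S) (hL4 : L4 ∈ S)
    (h12 : IsCompl L1 L2) (h34 : IsCompl L3 L4) :
    ∀ L ∈ S, Submodule.map (reflPair L1 L2 h12 ∘ₗ reflPair L3 L4 h34) L ∈ S := by
  obtain ⟨g, hg, B, hBsym, hB, rfl⟩ := hS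
  rcases eq_or_ne n 0 with rfl | hn
  · intro L hL
    have hss : Subsingleton (SympV 0) := inferInstance
    have : Subsingleton (Submodule ℝ (SympV 0)) := inferInstance
    exact Set.mem_union_right _ (Subsingleton.elim _ _)
  · have key : ∀ {M : Submodule ℝ (SympV n)},
        M ∈ ((Set.range fun lam : ℝ =>
            Submodule.map (g : SympV n →ₗ[ℝ] SympV n) (matGraph n (lam • B))) ∪
          {Submodule.map (g : SympV n →ₗ[ℝ] SympV n) (lagInfty n)}) →
        ∃ U ∈ Set.range (Gr n B) ∪ {lagInfty n},
          M = Submodule.map (g : SympV n →ₗ[ℝ] SympV n) U := by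
      rintro M (⟨a, rfl⟩ | rfl)
      · exact ⟨Gr n B a, Or.inl ⟨a, rfl⟩, rfl⟩
      · exact ⟨lagInfty n, Or.inr rfl, rfl⟩
    obtain ⟨U1, hU1, rfl⟩ := key hL1
    obtain ⟨U2, hU2, rfl⟩ := key hL2
    obtain ⟨U3, hU3, rfl⟩ := key hL3
    obtain ⟨U4, hU4, rfl⟩ := key hL4
    have h12' : IsCompl U1 U2 := isCompl_of_map_isCompl g h12
    have h34' : IsCompl U3 U4 := isCompl_of_map_isCompl g h34
    obtain ⟨p, q, r, s, hd, he⟩ := refl_param n B hB hn hU1 hU2 h12'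
    obtain ⟨p', q', r', s', hd', he'⟩ := refl_param n B hB hn hU3 hU4 h34'
    intro L hL
    obtain ⟨U, hU, rfl⟩ := key hL
    have hcomp : reflPair (Submodule.map (g : SympV n →ₗ[ℝ] SympV n) U1)
          (Submodule.map (g : SympV n →ₗ[ℝ] SympV n) U2) h12
        ∘ₗ reflPair (Submodule.map (g : SympV n →ₗ[ℝ] SympV n) U3)
          (Submodule.map (g : SympV n →ₗ[ℝ] SympV n) U4) h34
        = (g : SympV n →ₗ[ℝ] SympV n)
            ∘ₗ (Tmap n B p q r s ∘ₗ Tmap n B p' q' r' s')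
            ∘ₗ (g.symm : SympV n →ₗ[ℝ] SympV n) := by
      rw [reflPair_conj g h12' h12, reflPair_conj g h34' h34, he, he']
      apply LinearMap.ext
      intro z
      simp
    rw [hcomp, Tcomp n B hB]
    set P := p*p'+q*r'
    set Q := p*q'+q*s'
    set R := r*p'+s*r'
    set S' := r*q'+s*s'
    have hdet : P*S' - Q*R ≠ 0 := by
      have : P*S' - Q*R = (p*s - q*r) * (p'*s' - q'*r') := by
        simp only [P, Q, R, S']
        ring
      rw [this]
      exact mul_ne_zero hd hd'
    have hmap : Submodule.map ((g : SympV n →ₗ[ℝ] SympV n)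
          ∘ₗ Tmap n B P Q R S' ∘ₗ (g.symm : SympV n →ₗ[ℝ] SympV n))
          (Submodule.map (g : SympV n →ₗ[ℝ] SympV n) U)
        = Submodule.map (g : SympV n →ₗ[ℝ] SympV n)
            (Submodule.map (Tmap n B P Q R S') U) := by
      rw [← Submodule.map_comp, ← Submodule.map_comp]
      congr 1
      apply LinearMap.ext
      intro z
      simp
    rw [hmap]
    have hmem := Tmap_map_mem n B hB hdet hU
    rcases hmem with ⟨a, ha⟩ | hmem
    · exact Or.inl ⟨a, congrArg _ ha⟩
    · exact Or.inr (congrArg _ hmem)
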